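/- Let Y = (ℓ₂, |||·|||) be the renorming of ℓ₂ described in the context. For each n ∈ ℕ, set k := 32n − 16 and define x(n) := (1 − 1/n)e₁ + (1/(4n))·Σ_{i=2}^{k+1} e_i ∈ Y and x*(n) := (1 − 1/n)e₁* + (1/(4n))·Σ_{i=2}^{k+1} e_i* ∈ Y*. Then |||x(n)||| = ‖x(n)‖_{ℓ₂} = 1 and x*(n)(x(n)) = 1, the dual norm of x*(n) in Y* equals 1 and equals ‖x*(n)‖_{ℓ₂}, and moreover |||e₁ − x(n)||| → 0 and the dual norm of e₁* − x*(n) tends to 0 as n → ∞. -/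

import Mathlib

open NormedSpace Topology Filter

noncomputable section

/-- The real sequence space ℓ₂. -/
abbrev H : Type := lp (fun _ : ℕ => ℝ) 2

/-- The standard unit vector basis of ℓ₂ (`e 0` plays the role of `e₁`, and `e n` for
`n ≥ 1` the roles of `e_n`, `n ≥ 2`, of the paper). -/
def e (n : ℕ) : H := lp.single 2 n (1 : ℝ)

/-- The unit ball of the auxiliary renorming of ℓ₂: the closed convex hull of
`B_{ℓ₂} ∪ {±(e₁ + e_n) : n ≥ 2}`. -/
def ballB : Set H :=
  closure (convexHull ℝ (Metric.closedBall (0 : H) 1 ∪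
    {z : H | ∃ n : ℕ, 1 ≤ n ∧ (z = e 0 + e n ∨ z = -(e 0 + e n))}))

/-- The norm `‖·‖` whose unit ball is `ballB`, i.e. the Minkowski gauge of `ballB`. -/
def normB (x : H) : ℝ := gauge ballB x

/-- The norm `|||x||| = max (‖x‖, sup_{n ≥ 2} |x₁ − 2 x_n|)` of the renorming `Y` of ℓ₂. -/
def tripleNorm (x : H) : ℝ :=
  max (normB x) (sSup {r : ℝ | ∃ n : ℕ, 1 ≤ n ∧ r = |x 0 - 2 * x n|})

/-- The canonical pairing of ℓ₂ with itself. -/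
def pairing (f y : H) : ℝ := ∑' i : ℕ, f i * y i

/-- The dual norm of `tripleNorm`, computed on ℓ₂ via the canonical pairing. -/
def dualTripleNorm (f : H) : ℝ :=
  sSup ((fun y => pairing f y) '' {y : H | tripleNorm y ≤ 1})

/-- `x(n) = (1 − 1/n) e₁ + (1/(4n)) Σ_{i=2}^{k+1} e_i` with `k = 32n − 16`
(in 0-based indexing, the sum runs over `e i` for `1 ≤ i ≤ 32n − 16`). -/
def xx (n : ℕ) : H :=
  (1 - 1 / (n : ℝ)) • e 0 + (1 / (4 * (n : ℝ))) • ∑ i ∈ Finset.Icc 1 (32 * n - 16), e i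

/-- `x*(n) = (1 − 1/n) e₁* + (1/(4n)) Σ_{i=2}^{k+1} e_i*`, realized in ℓ₂ via the
canonical pairing; it is given by the same formula as `x(n)`. -/
def xs (n : ℕ) : H := xx n

/-! ### Auxiliary lemmas -/

section Aux
open RealInnerProductSpace Set Metric

lemma e_apply (i j : ℕ) : e i j = if j = i then (1:ℝ) else 0 := by
  simp [e, lp.single_apply, Pi.single_apply]

lemma inner_e_right (i : ℕ) (f : H) : ⟪f, e i⟫ = f i := by
  simp [e, lp.inner_single_right]

lemma pairing_inner (f g : H) : pairing f g = ⟪f, g⟫ := by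
  rw [pairing, lp.inner_eq_tsum]; simp [RCLike.inner_apply, mul_comm]

lemma S_apply (t : Finset ℕ) (m : ℕ) : (∑ i ∈ t, e i) m = if m ∈ t then (1:ℝ) else 0 := by
  rw [lp.coeFn_sum, Finset.sum_apply]
  simp [e_apply]

lemma comb_apply (a b : ℝ) (t : Finset ℕ) (m : ℕ) :
    (a • e 0 + b • ∑ i ∈ t, e i) m
      = (if m = 0 then a else 0) + (if m ∈ t then b else 0) := by
  rw [lp.coeFn_add, Pi.add_apply, lp.coeFn_smul, lp.coeFn_smul, Pi.smul_apply, Pi.smul_apply,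
    e_apply, S_apply]
  simp [mul_ite]

lemma inner_comb (a b : ℝ) (t : Finset ℕ) (h0 : 0 ∉ t) :
    ⟪a • e 0 + b • ∑ i ∈ t, e i, a • e 0 + b • ∑ i ∈ t, e i⟫
      = a ^ 2 + b ^ 2 * t.card := by
  have hS : ∀ f : H, ⟪f, ∑ i ∈ t, e i⟫ = ∑ i ∈ t, f i := by
    intro f; rw [inner_sum]; simp [inner_e_right]
  rw [inner_add_right, real_inner_smul_right, real_inner_smul_right, hS, inner_e_right]
  have h1 : ∑ i ∈ t, (a • e 0 + b • ∑ j ∈ t, e j) i = b * t.card := by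
    rw [Finset.sum_congr rfl (fun i hi => comb_apply a b t i)]
    rw [Finset.sum_congr rfl (fun i hi => by
      rw [if_neg (by rintro rfl; exact h0 hi), if_pos hi, zero_add])]
    simp [mul_comm]
  rw [h1, comb_apply, if_pos rfl, if_neg h0]
  ring

lemma ball_subset_ballB : Metric.closedBall (0 : H) 1 ⊆ ballB :=
  (Set.subset_union_left.trans (subset_convexHull ℝ _)).trans subset_closure

lemma absorbent_ballB : Absorbent ℝ ballB :=
  (absorbent_ball_zero one_pos).mono (ball_subset_closedBall.trans ball_subset_ballB)

lemma normB_le_norm (x : H) : normB x ≤ ‖x‖ := by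
  have := gauge_mono ((absorbent_ball_zero one_pos).mono ball_subset_closedBall)
    ball_subset_ballB x
  rwa [gauge_closedBall one_pos.le, div_one] at this

lemma inner_e0e_self (m : ℕ) : ⟪e 0 + e m, e 0 + e m⟫ = (if (0:ℕ) = m then 4 else 2 : ℝ) := by
  rw [inner_add_right, inner_add_left, inner_add_left, inner_e_right, inner_e_right,
    inner_e_right, inner_e_right]
  by_cases h : (0:ℕ) = m
  · simp [lp.coeFn_add, e_apply, h]; norm_num
  · simp [lp.coeFn_add, e_apply, eq_comm, h, Ne.symm h]; norm_num

lemma norm_e0e (m : ℕ) (hm : 1 ≤ m) : ‖e 0 + e m‖ = Real.sqrt 2 := by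
  rw [norm_eq_sqrt_real_inner, inner_e0e_self, if_neg (by omega)]

/-- Key upper bound on `ballB`. -/
lemma inner_le_on_ballB (f : H) (C : ℝ)
    (hball : ∀ z : H, ‖z‖ ≤ 1 → ⟪f, z⟫ ≤ C)
    (hpm : ∀ m : ℕ, 1 ≤ m → ⟪f, e 0 + e m⟫ ≤ C ∧ ⟪f, -(e 0 + e m)⟫ ≤ C) :
    ∀ y ∈ ballB, ⟪f, y⟫ ≤ C := by
  intro y hy
  have hlin : IsLinearMap ℝ (fun y : H => ⟪f, y⟫) :=
    ⟨fun a b => inner_add_right _ _ _, fun c a => real_inner_smul_right _ _ _⟩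
  have hconv : Convex ℝ {y : H | ⟪f, y⟫ ≤ C} := convex_halfSpace_le hlin C
  have hclosed : IsClosed {y : H | ⟪f, y⟫ ≤ C} :=
    isClosed_le (Continuous.inner continuous_const continuous_id) continuous_const
  have hgen : (Metric.closedBall (0 : H) 1 ∪
      {z : H | ∃ n : ℕ, 1 ≤ n ∧ (z = e 0 + e n ∨ z = -(e 0 + e n))}) ⊆ {y : H | ⟪f, y⟫ ≤ C} := by
    rintro z (hz | ⟨m, hm, rfl | rfl⟩)
    · exact hball z (by simpa [mem_closedBall, dist_zero_right] using hz)
    · exact (hpm m hm).1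
    · exact (hpm m hm).2
  exact (closure_minimal (convexHull_min hgen hconv) hclosed) hy

lemma one_le_normB (x f : H) (hfx : ⟪f, x⟫ = 1) (hf : ∀ y ∈ ballB, ⟪f, y⟫ ≤ 1) :
    1 ≤ normB x := by
  by_contra h
  push_neg at h
  obtain ⟨b, hb0, hb1, hx⟩ := exists_lt_of_gauge_lt absorbent_ballB h
  obtain ⟨z, hz, rfl⟩ := hx
  rw [real_inner_smul_right] at hfx
  nlinarith [hf z hz]

lemma inner_le_of_normB_le_one (f : H) (C : ℝ) (hC : 0 < C)
    (hf : ∀ z ∈ ballB, ⟪f, z⟫ ≤ C) (y : H) (h1 : normB y ≤ 1) : ⟪f, y⟫ ≤ C := by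
  by_contra hlt
  push_neg at hlt
  have hgl : gauge ballB y < ⟪f, y⟫ / C := lt_of_le_of_lt h1 ((one_lt_div hC).2 hlt)
  obtain ⟨b, hb0, hba, hx⟩ := exists_lt_of_gauge_lt absorbent_ballB hgl
  obtain ⟨z, hz, rfl⟩ := hx
  rw [real_inner_smul_right] at hba hlt
  have h3 : b * ⟪f,z⟫ ≤ b * C := mul_le_mul_of_nonneg_left (hf z hz) hb0.le
  have h4 : b * ⟪f,z⟫ / C ≤ b := by rw [div_le_iff₀ hC]; nlinarith
  linarith

lemma pairing_le_of_tripleNorm_le_one (f : H) (C : ℝ) (hC : 0 < C)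
    (hf : ∀ z ∈ ballB, ⟪f, z⟫ ≤ C) (y : H) (hy : tripleNorm y ≤ 1) : pairing f y ≤ C := by
  rw [pairing_inner]
  exact inner_le_of_normB_le_one f C hC hf y (le_trans (le_max_left _ _) hy)

lemma one_le_sqrt_two : (1:ℝ) ≤ Real.sqrt 2 := by
  rw [show (1:ℝ) = Real.sqrt 1 from Real.sqrt_one.symm]
  exact Real.sqrt_le_sqrt (by norm_num)

lemma inner_le_sqrt_two (f : H) : ∀ y ∈ ballB, ⟪f, y⟫ ≤ ‖f‖ * Real.sqrt 2 := by
  apply inner_le_on_ballB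
  · intro z hz
    calc ⟪f, z⟫ ≤ ‖f‖ * ‖z‖ := real_inner_le_norm f z
    _ ≤ ‖f‖ * Real.sqrt 2 := by
        apply mul_le_mul_of_nonneg_left (hz.trans one_le_sqrt_two) (norm_nonneg f)
  · intro m hm
    constructor
    · calc ⟪f, e 0 + e m⟫ ≤ ‖f‖ * ‖e 0 + e m‖ := real_inner_le_norm _ _
      _ = ‖f‖ * Real.sqrt 2 := by rw [norm_e0e m hm]
    · calc ⟪f, -(e 0 + e m)⟫ ≤ ‖f‖ * ‖-(e 0 + e m)‖ := real_inner_le_norm _ _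
      _ = ‖f‖ * Real.sqrt 2 := by rw [norm_neg, norm_e0e m hm]

lemma bddAbove_pairing (f : H) :
    BddAbove ((fun y => pairing f y) '' {y : H | tripleNorm y ≤ 1}) := by
  refine ⟨‖f‖ * Real.sqrt 2 + 1, ?_⟩
  rintro v ⟨y, hy, rfl⟩
  refine pairing_le_of_tripleNorm_le_one f _ ?_ ?_ y hy
  · positivity
  · intro z hz
    exact (inner_le_sqrt_two f z hz).trans (le_add_of_nonneg_right one_pos.le)

lemma dual_le (f : H) (C : ℝ) (hC : 0 < C) (hf : ∀ z ∈ ballB, ⟪f, z⟫ ≤ C) :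
    dualTripleNorm f ≤ C := by
  apply Real.sSup_le _ hC.le
  rintro v ⟨y, hy, rfl⟩
  exact pairing_le_of_tripleNorm_le_one f C hC hf y hy

lemma tripleNorm_zero_le_one : tripleNorm (0 : H) ≤ 1 := by
  rw [tripleNorm]
  apply max_le
  · rw [normB, gauge_zero]; norm_num
  · have : {r : ℝ | ∃ n : ℕ, 1 ≤ n ∧ r = |(0:H) 0 - 2 * (0:H) n|} = {0} := by
      ext r
      simp only [Set.mem_setOf_eq, Set.mem_singleton_iff, lp.coeFn_zero, Pi.zero_apply]
      constructor
      · rintro ⟨m, hm, rfl⟩; simp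
      · rintro rfl; exact ⟨1, le_refl 1, by simp⟩
    rw [this, csSup_singleton]; norm_num

lemma dual_nonneg (f : H) : 0 ≤ dualTripleNorm f := by
  refine le_csSup (bddAbove_pairing f) ⟨0, tripleNorm_zero_le_one, ?_⟩
  simp [pairing, lp.coeFn_zero]

lemma tripleNorm_nonneg (x : H) : 0 ≤ tripleNorm x :=
  le_trans (gauge_nonneg _) (le_max_left _ _)

/-! ### Computations for `xx n` -/

lemma zero_not_mem_Icc (k : ℕ) : 0 ∉ Finset.Icc 1 k := by simp

lemma card_cast (n : ℕ) (hn : 1 ≤ n) :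
    ((Finset.Icc 1 (32 * n - 16)).card : ℝ) = 32 * (n:ℝ) - 16 := by
  rw [Nat.card_Icc]
  have h16 : 16 ≤ 32 * n := by omega
  push_cast [Nat.cast_sub h16]
  ring

lemma inner_xx_self (n : ℕ) (hn : 1 ≤ n) : ⟪xx n, xx n⟫ = 1 := by
  rw [xx, inner_comb _ _ _ (zero_not_mem_Icc _), card_cast n hn]
  have h0 : (n:ℝ) ≠ 0 := by
    have : (1:ℝ) ≤ n := Nat.one_le_cast.2 hn
    linarith
  field_simp
  ring

lemma norm_xx (n : ℕ) (hn : 1 ≤ n) : ‖xx n‖ = 1 := by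
  rw [norm_eq_sqrt_real_inner, inner_xx_self n hn, Real.sqrt_one]

lemma diffEq (n : ℕ) :
    e 0 - xx n = (1 / (n:ℝ)) • e 0
      + (-(1 / (4 * (n:ℝ)))) • ∑ i ∈ Finset.Icc 1 (32 * n - 16), e i := by
  rw [xx]; module

lemma norm_diff (n : ℕ) (hn : 1 ≤ n) : ‖e 0 - xx n‖ = Real.sqrt (2 / n) := by
  have h0 : (n:ℝ) ≠ 0 := by
    have : (1:ℝ) ≤ n := Nat.one_le_cast.2 hn
    linarith
  rw [diffEq, norm_eq_sqrt_real_inner, inner_comb _ _ _ (zero_not_mem_Icc _), card_cast n hn]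
  congr 1
  field_simp
  ring

lemma inner_xx_le_one (n : ℕ) (hn : 1 ≤ n) : ∀ y ∈ ballB, ⟪xx n, y⟫ ≤ 1 := by
  have h1n : (1:ℝ) ≤ n := Nat.one_le_cast.2 hn
  have h0 : (0:ℝ) < n := by linarith
  have hu1 : 1 / (n:ℝ) ≤ 1 := by rw [div_le_one h0]; linarith
  have hu0 : 0 < 1 / (n:ℝ) := by positivity
  have hb0 : 0 < 1 / (4 * (n:ℝ)) := by positivity
  have hb1 : 1 / (4 * (n:ℝ)) = (1 / (n:ℝ)) / 4 := by
    rw [div_div, mul_comm]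
  apply inner_le_on_ballB
  · intro z hz
    calc ⟪xx n, z⟫ ≤ ‖xx n‖ * ‖z‖ := real_inner_le_norm _ _
    _ ≤ 1 := by rw [norm_xx n hn, one_mul]; exact hz
  · intro m hm
    have key : ⟪xx n, e 0 + e m⟫ = (xx n) 0 + (xx n) m := by
      rw [inner_add_right, inner_e_right, inner_e_right]
    have c0 : (xx n) 0 = 1 - 1 / (n:ℝ) := by
      rw [xx, comb_apply, if_pos rfl, if_neg (zero_not_mem_Icc _), add_zero]
    have cm : (xx n) m = if m ∈ Finset.Icc 1 (32 * n - 16) then 1 / (4 * (n:ℝ)) else 0 := by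
      rw [xx, comb_apply, if_neg (by omega), zero_add]
    have hrange : 0 ≤ (xx n) 0 + (xx n) m ∧ (xx n) 0 + (xx n) m ≤ 1 := by
      rw [c0, cm]
      split_ifs <;> constructor <;> linarith
    rw [inner_neg_right]
    constructor
    · rw [key]; exact hrange.2
    · rw [key]; linarith [hrange.1]

lemma supTerm_xx_le_one (n : ℕ) (hn : 1 ≤ n) :
    sSup {r : ℝ | ∃ m : ℕ, 1 ≤ m ∧ r = |(xx n) 0 - 2 * (xx n) m|} ≤ 1 := by
  have h1n : (1:ℝ) ≤ n := Nat.one_le_cast.2 hn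
  have h0 : (0:ℝ) < n := by linarith
  have hu1 : 1 / (n:ℝ) ≤ 1 := by rw [div_le_one h0]; linarith
  have hu0 : 0 < 1 / (n:ℝ) := by positivity
  have hb1 : 1 / (4 * (n:ℝ)) = (1 / (n:ℝ)) / 4 := by rw [div_div, mul_comm]
  apply Real.sSup_le _ one_pos.le
  rintro r ⟨m, hm, rfl⟩
  have c0 : (xx n) 0 = 1 - 1 / (n:ℝ) := by
    rw [xx, comb_apply, if_pos rfl, if_neg (zero_not_mem_Icc _), add_zero]
  have cm : (xx n) m = if m ∈ Finset.Icc 1 (32 * n - 16) then (1 / (n:ℝ)) / 4 else 0 := by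
    rw [xx, comb_apply, if_neg (by omega), zero_add, hb1]
  rw [c0, cm, abs_le]
  split_ifs <;> constructor <;> linarith

lemma tripleNorm_xx (n : ℕ) (hn : 1 ≤ n) : tripleNorm (xx n) = 1 := by
  have hle : normB (xx n) ≤ 1 := by
    have := normB_le_norm (xx n)
    rwa [norm_xx n hn] at this
  have hge : 1 ≤ normB (xx n) :=
    one_le_normB (xx n) (xx n) (inner_xx_self n hn) (inner_xx_le_one n hn)
  rw [tripleNorm, max_eq_left]
  · linarith
  · calc sSup {r : ℝ | ∃ m : ℕ, 1 ≤ m ∧ r = |(xx n) 0 - 2 * (xx n) m|} ≤ 1 :=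
        supTerm_xx_le_one n hn
    _ ≤ normB (xx n) := hge

lemma pairing_xx (n : ℕ) (hn : 1 ≤ n) : pairing (xs n) (xx n) = 1 := by
  rw [xs, pairing_inner]
  exact inner_xx_self n hn

lemma dual_xx (n : ℕ) (hn : 1 ≤ n) : dualTripleNorm (xs n) = 1 := by
  apply le_antisymm
  · exact dual_le _ 1 one_pos (by rw [xs]; exact inner_xx_le_one n hn)
  · refine le_csSup (bddAbove_pairing _) ⟨xx n, ?_, pairing_xx n hn⟩
    rw [Set.mem_setOf_eq, tripleNorm_xx n hn]

lemma supTerm_diff_le (n : ℕ) (hn : 1 ≤ n) :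
    sSup {r : ℝ | ∃ m : ℕ, 1 ≤ m ∧ r = |(e 0 - xx n) 0 - 2 * (e 0 - xx n) m|}
      ≤ (3/2) / (n:ℝ) := by
  have h1n : (1:ℝ) ≤ n := Nat.one_le_cast.2 hn
  have h0 : (0:ℝ) < n := by linarith
  have hu0 : 0 < 1 / (n:ℝ) := by positivity
  have hb1 : 1 / (4 * (n:ℝ)) = (1 / (n:ℝ)) / 4 := by rw [div_div, mul_comm]
  have hgoal : (3/2) / (n:ℝ) = (3/2) * (1 / (n:ℝ)) := by ring
  apply Real.sSup_le _ (by positivity)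
  rintro r ⟨m, hm, rfl⟩
  have c0 : (e 0 - xx n) 0 = 1 / (n:ℝ) := by
    rw [diffEq, comb_apply, if_pos rfl, if_neg (zero_not_mem_Icc _), add_zero]
  have cm : (e 0 - xx n) m
      = if m ∈ Finset.Icc 1 (32 * n - 16) then -((1 / (n:ℝ)) / 4) else 0 := by
    rw [diffEq, comb_apply, if_neg (by omega), zero_add, hb1]
  rw [c0, cm, abs_le, hgoal]
  split_ifs <;> constructor <;> linarith

lemma tripleNorm_diff_le (n : ℕ) (hn : 1 ≤ n) :
    tripleNorm (e 0 - xx n) ≤ max (Real.sqrt (2 / n)) ((3/2) / (n:ℝ)) := by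
  apply max_le_max
  · have := normB_le_norm (e 0 - xx n)
    rwa [norm_diff n hn] at this
  · exact supTerm_diff_le n hn

lemma dual_diff_le (n : ℕ) (hn : 1 ≤ n) :
    dualTripleNorm (e 0 - xs n) ≤ Real.sqrt (2 / n) * Real.sqrt 2 := by
  have h1n : (1:ℝ) ≤ n := Nat.one_le_cast.2 hn
  have hpos : (0:ℝ) < 2 / n := by positivity
  refine dual_le _ _ (by positivity) ?_
  intro z hz
  have := inner_le_sqrt_two (e 0 - xs n) z hz
  rwa [xs, norm_diff n hn] at this

end Aux

/-- For each `n ≥ 1`: `|||x(n)||| = ‖x(n)‖₂ = x*(n)(x(n)) = 1` and the dual norm of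
`x*(n)` equals `1 = ‖x*(n)‖₂`; moreover `|||e₁ − x(n)||| → 0` and the dual norm of
`e₁* − x*(n)` tends to `0`. -/
theorem xx_xs_norms_and_convergence :
    (∀ n : ℕ, 1 ≤ n →
      tripleNorm (xx n) = 1 ∧ ‖xx n‖ = 1 ∧ pairing (xs n) (xx n) = 1 ∧
      dualTripleNorm (xs n) = 1 ∧ ‖xs n‖ = 1) ∧
    Tendsto (fun n : ℕ => tripleNorm (e 0 - xx n)) atTop (nhds 0) ∧
    Tendsto (fun n : ℕ => dualTripleNorm (e 0 - xs n)) atTop (nhds 0) := by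
  have hsq : Tendsto (fun n : ℕ => Real.sqrt (2 / n)) atTop (nhds 0) := by
    have h2 : Tendsto (fun n : ℕ => (2 : ℝ) / n) atTop (nhds 0) :=
      tendsto_const_div_atTop_nhds_zero_nat 2
    exact (Real.continuous_sqrt.tendsto' 0 0 Real.sqrt_zero).comp h2
  refine ⟨fun n hn => ⟨tripleNorm_xx n hn, norm_xx n hn, pairing_xx n hn, dual_xx n hn,
      by rw [xs]; exact norm_xx n hn⟩, ?_, ?_⟩
  · apply squeeze_zero' (Eventually.of_forall fun n => tripleNorm_nonneg _)
      (eventually_atTop.2 ⟨1, fun n hn => tripleNorm_diff_le n hn⟩)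
    have h32 : Tendsto (fun n : ℕ => (3/2 : ℝ) / n) atTop (nhds 0) :=
      tendsto_const_div_atTop_nhds_zero_nat (3/2)
    simpa using hsq.max h32
  · apply squeeze_zero' (Eventually.of_forall fun n => dual_nonneg _)
      (eventually_atTop.2 ⟨1, fun n hn => dual_diff_le n hn⟩)
    simpa using hsq.mul_const (Real.sqrt 2)

end
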